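/- Let X, Y be independent, identically distributed real random variables whose common law is absolutely continuous with respect to Lebesgue measure and symmetric about 0 (i.e., the law of −X equals the law of X), and let k ∈ [0,1]. Define C_k = 1 if X + kY ≥ 0 and C_k = 0 otherwise. Then MI(C_k, X²) = 0; equivalently, the joint law of (X², C_k) equals the product of the law of X² and the law of C_k. -/
import Mathlib


open MeasureTheory ProbabilityTheory Real
open scoped Classical

/-- Kullback–Leibler divergence of `μ` from `ν` (with values in `EReal`),
defined as `+∞` unless `μ ≪ ν` and the log-likelihood ratio is `μ`-integrable. -/
noncomputable def klDiv {α : Type*} [MeasurableSpace α] (μ ν : Measure α) : EReal :=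
  if μ ≪ ν ∧ Integrable (llr μ ν) μ then ((∫ x, llr μ ν x ∂μ : ℝ) : EReal) else ⊤

/-- The uniform probability measure on the interval `[-δ, δ]`. -/
noncomputable def uniformIcc (δ : ℝ) : Measure ℝ :=
  (ENNReal.ofReal (2 * δ))⁻¹ • volume.restrict (Set.Icc (-δ) δ)

lemma klDiv_self' {α : Type*} [MeasurableSpace α] (μ : Measure α) [SigmaFinite μ] :
    klDiv μ μ = 0 := by
  have h1 : llr μ μ =ᵐ[μ] 0 := by
    filter_upwards [μ.rnDeriv_self] with x hx
    simp [llr, hx]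
  have h2 : Integrable (llr μ μ) μ := by
    rw [integrable_congr h1]
    exact integrable_zero _ _ _
  rw [klDiv, if_pos ⟨Measure.AbsolutelyContinuous.refl μ, h2⟩, integral_congr_ae h1]
  simp

theorem stmt_1 {Ω : Type*} [MeasurableSpace Ω] (P : Measure Ω) [IsProbabilityMeasure P]
    (k : ℝ) (hk : k ∈ Set.Icc (0 : ℝ) 1)
    (X Y : Ω → ℝ) (hX : Measurable X) (hY : Measurable Y)
    (hindep : IndepFun X Y P)
    (hid : P.map X = P.map Y)
    (hac : P.map X ≪ volume)
    (hsym : (P.map X).map (fun x => -x) = P.map X)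
    (C : Ω → ℕ) (hC : C = fun ω => if 0 ≤ X ω + k * Y ω then 1 else 0) :
    klDiv (P.map (fun ω => ((X ω) ^ 2, C ω)))
        ((P.map (fun ω => (X ω) ^ 2)).prod (P.map C)) = 0 ∧
      P.map (fun ω => ((X ω) ^ 2, C ω))
        = (P.map (fun ω => (X ω) ^ 2)).prod (P.map C) := by
  have hXkY : Measurable fun ω => X ω + k * Y ω := hX.add (hY.const_mul k)
  have hCmeas : Measurable C := by
    rw [hC]
    exact Measurable.ite (measurableSet_le measurable_const hXkY) measurable_const
      measurable_const
  have hX2 : Measurable fun ω => X ω ^ 2 := hX.pow_const 2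
  set μ : Measure ℝ := P.map X with hμdef
  haveI : IsProbabilityMeasure μ := Measure.isProbabilityMeasure_map hX.aemeasurable
  have hXYlaw : P.map (fun ω => (X ω, Y ω)) = μ.prod μ := by
    rw [(indepFun_iff_map_prod_eq_prod_map_map hX.aemeasurable hY.aemeasurable).mp hindep,
      ← hid]
  have hnegmeas : Measurable fun p : ℝ × ℝ => (-p.1, -p.2) :=
    (measurable_fst.neg).prodMk (measurable_snd.neg)
  have hprodsym : (μ.prod μ).map (fun p : ℝ × ℝ => (-p.1, -p.2)) = μ.prod μ := by
    have h : (fun p : ℝ × ℝ => (-p.1, -p.2))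
        = Prod.map (fun x : ℝ => -x) (fun x : ℝ => -x) := rfl
    rw [h, ← Measure.map_prod_map _ _ measurable_neg measurable_neg, hsym]
  -- the zero set
  have hS0meas : MeasurableSet {p : ℝ × ℝ | p.1 + k * p.2 = 0} :=
    measurableSet_eq_fun (measurable_fst.add (measurable_snd.const_mul k)) measurable_const
  have hS0 : (μ.prod μ) {p : ℝ × ℝ | p.1 + k * p.2 = 0} = 0 := by
    rw [Measure.prod_apply_symm hS0meas]
    have h : ∀ y : ℝ, μ {a : ℝ | a + k * y = 0} = 0 := by
      intro y
      have he : {a : ℝ | a + k * y = 0} = {-(k * y)} := by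
        ext x
        simp only [Set.mem_setOf_eq, Set.mem_singleton_iff]
        constructor <;> intro h <;> linarith
      rw [he]
      exact hac volume_singleton
    simp [h]
  -- key halving lemma on the product space
  have key : ∀ T : Set ℝ, MeasurableSet T → (∀ x, -x ∈ T ↔ x ∈ T) →
      (μ.prod μ) {p : ℝ × ℝ | p.1 ∈ T ∧ 0 ≤ p.1 + k * p.2}
        = (μ.prod μ) {p : ℝ × ℝ | p.1 ∈ T} / 2 := by
    intro T hT hTsym
    set ν := μ.prod μ with hν
    set A := {p : ℝ × ℝ | p.1 ∈ T ∧ 0 ≤ p.1 + k * p.2} with hA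
    set B := {p : ℝ × ℝ | p.1 ∈ T ∧ p.1 + k * p.2 < 0} with hB
    have hAmeas : MeasurableSet A :=
      (measurable_fst hT).inter
        (measurableSet_le measurable_const (measurable_fst.add (measurable_snd.const_mul k)))
    have hBmeas : MeasurableSet B :=
      (measurable_fst hT).inter
        (measurableSet_lt (measurable_fst.add (measurable_snd.const_mul k)) measurable_const)
    have hdisj : Disjoint A B := by
      rw [Set.disjoint_left]
      rintro p ⟨_, h1⟩ ⟨_, h2⟩
      linarith
    have hunion : A ∪ B = {p : ℝ × ℝ | p.1 ∈ T} := by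
      ext p
      simp only [hA, hB, Set.mem_union, Set.mem_setOf_eq]
      constructor
      · rintro (⟨h, _⟩ | ⟨h, _⟩) <;> exact h
      · intro h
        rcases le_or_gt 0 (p.1 + k * p.2) with h' | h'
        · exact Or.inl ⟨h, h'⟩
        · exact Or.inr ⟨h, h'⟩
    have hAB : ν A = ν B := by
      have hpre : (fun p : ℝ × ℝ => (-p.1, -p.2)) ⁻¹' A
          = B ∪ ({p : ℝ × ℝ | p.1 ∈ T} ∩ {p : ℝ × ℝ | p.1 + k * p.2 = 0}) := by
        ext p
        simp only [Set.mem_preimage, hA, hB, Set.mem_setOf_eq, Set.mem_union,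
          Set.mem_inter_iff]
        constructor
        · rintro ⟨h1, h2⟩
          have h1' : p.1 ∈ T := (hTsym p.1).mp h1
          rcases lt_or_eq_of_le (by linarith : p.1 + k * p.2 ≤ 0) with h | h
          · exact Or.inl ⟨h1', h⟩
          · exact Or.inr ⟨h1', h⟩
        · rintro (⟨h1, h2⟩ | ⟨h1, h2⟩) <;>
            exact ⟨(hTsym p.1).mpr h1, by linarith⟩
      have hmapA : ν A = ν ((fun p : ℝ × ℝ => (-p.1, -p.2)) ⁻¹' A) := by
        conv_lhs => rw [← hprodsym]
        rw [Measure.map_apply hnegmeas hAmeas]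
      rw [hmapA, hpre]
      have hnull : ν ({p : ℝ × ℝ | p.1 ∈ T} ∩ {p : ℝ × ℝ | p.1 + k * p.2 = 0}) = 0 :=
        measure_mono_null Set.inter_subset_right hS0
      refine le_antisymm ?_ (measure_mono Set.subset_union_left)
      calc ν (B ∪ {p : ℝ × ℝ | p.1 ∈ T} ∩ {p : ℝ × ℝ | p.1 + k * p.2 = 0})
          ≤ ν B + ν ({p : ℝ × ℝ | p.1 ∈ T} ∩ {p : ℝ × ℝ | p.1 + k * p.2 = 0}) :=
            measure_union_le _ _
        _ = ν B := by rw [hnull, add_zero]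
    have hsum : ν A + ν B = ν {p : ℝ × ℝ | p.1 ∈ T} := by
      rw [← hunion, measure_union hdisj hBmeas]
    rw [← hsum, ← hAB, ENNReal.add_div, ENNReal.add_halves]
  -- translate to Ω
  have keyΩ : ∀ T : Set ℝ, MeasurableSet T → (∀ x, -x ∈ T ↔ x ∈ T) →
      P (X ⁻¹' T ∩ {ω | 0 ≤ X ω + k * Y ω}) = P (X ⁻¹' T) / 2 := by
    intro T hT hTsym
    have hAmeas : MeasurableSet {p : ℝ × ℝ | p.1 ∈ T ∧ 0 ≤ p.1 + k * p.2} :=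
      (measurable_fst hT).inter
        (measurableSet_le measurable_const (measurable_fst.add (measurable_snd.const_mul k)))
    have h1 : P (X ⁻¹' T ∩ {ω | 0 ≤ X ω + k * Y ω})
        = (μ.prod μ) {p : ℝ × ℝ | p.1 ∈ T ∧ 0 ≤ p.1 + k * p.2} := by
      rw [← hXYlaw, Measure.map_apply (hX.prodMk hY) hAmeas]
      rfl
    have h2 : P (X ⁻¹' T) = (μ.prod μ) {p : ℝ × ℝ | p.1 ∈ T} := by
      rw [← hXYlaw, show {p : ℝ × ℝ | p.1 ∈ T} = Prod.fst ⁻¹' T from rfl,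
        Measure.map_apply (hX.prodMk hY) (measurable_fst hT)]
      rfl
    rw [h1, h2, key T hT hTsym]
  set E : Set Ω := {ω | 0 ≤ X ω + k * Y ω} with hE
  have hEmeas : MeasurableSet E := measurableSet_le measurable_const hXkY
  have hEhalf : P E = 2⁻¹ := by
    have h := keyΩ Set.univ MeasurableSet.univ (fun x => by simp)
    simpa [ENNReal.div_eq_inv_mul] using h
  have hEhalf' : P Eᶜ = 2⁻¹ := by
    rw [measure_compl hEmeas (measure_ne_top P E), hEhalf, measure_univ]
    exact ENNReal.one_sub_inv_two
  -- independence of X² and C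
  have hindep2 : IndepFun (fun ω => X ω ^ 2) C P := by
    rw [indepFun_iff_measure_inter_preimage_eq_mul]
    intro s t hs ht
    set T : Set ℝ := (fun x : ℝ => x ^ 2) ⁻¹' s with hT
    have hTmeas : MeasurableSet T := (measurable_id.pow_const 2) hs
    have hTsym : ∀ x : ℝ, -x ∈ T ↔ x ∈ T := by
      intro x
      simp [hT, neg_pow, Set.mem_preimage]
    have hpreX : (fun ω => X ω ^ 2) ⁻¹' s = X ⁻¹' T := rfl
    have hkeyT := keyΩ T hTmeas hTsym
    have hCE : C ⁻¹' {1} = E := by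
      ext ω
      simp only [hC, Set.mem_preimage, Set.mem_singleton_iff, hE, Set.mem_setOf_eq]
      split_ifs with h <;> simp [h]
    have hC0 : C ⁻¹' {0} = Eᶜ := by
      ext ω
      simp only [hC, Set.mem_preimage, Set.mem_singleton_iff, hE, Set.mem_compl_iff,
        Set.mem_setOf_eq]
      split_ifs with h <;> simp [h]
    by_cases h1 : (1 : ℕ) ∈ t <;> by_cases h0 : (0 : ℕ) ∈ t
    · -- both: preimage is univ
      have hct : C ⁻¹' t = Set.univ := by
        ext ω
        simp only [hC, Set.mem_preimage, Set.mem_univ, iff_true]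
        split_ifs <;> assumption
      rw [hct]
      simp
    · -- only 1
      have hct : C ⁻¹' t = E := by
        ext ω
        simp only [hC, Set.mem_preimage, hE, Set.mem_setOf_eq]
        split_ifs with h <;> simp [h, h1, h0]
      rw [hct, hpreX, hkeyT, hEhalf, ENNReal.div_eq_inv_mul, mul_comm]
    · -- only 0
      have hct : C ⁻¹' t = Eᶜ := by
        ext ω
        simp only [hC, Set.mem_preimage, Set.mem_compl_iff, hE, Set.mem_setOf_eq]
        split_ifs with h <;> simp [h, h1, h0]
      rw [hct, hpreX]
      have hsplit : P (X ⁻¹' T ∩ E) + P (X ⁻¹' T ∩ Eᶜ) = P (X ⁻¹' T) := by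
        rw [← Set.diff_eq]
        exact measure_inter_add_diff _ hEmeas
      have hhalf : P (X ⁻¹' T ∩ E) = P (X ⁻¹' T) / 2 := hkeyT
      have hfin : P (X ⁻¹' T) / 2 ≠ ⊤ := by
        rw [ENNReal.div_eq_inv_mul]
        exact ENNReal.mul_ne_top (by simp) (measure_ne_top _ _)
      have : P (X ⁻¹' T) / 2 + P (X ⁻¹' T ∩ Eᶜ)
          = P (X ⁻¹' T) / 2 + P (X ⁻¹' T) / 2 := by
        rw [← hhalf, hsplit, ← ENNReal.add_halves (P (X ⁻¹' T))]
        rw [hhalf]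
      have h2 : P (X ⁻¹' T ∩ Eᶜ) = P (X ⁻¹' T) / 2 :=
        ENNReal.add_right_inj hfin |>.mp this
      rw [h2, hEhalf', ENNReal.div_eq_inv_mul, mul_comm]
    · -- neither
      have hct : C ⁻¹' t = ∅ := by
        ext ω
        simp only [hC, Set.mem_preimage, Set.mem_empty_iff_false, iff_false]
        split_ifs <;> assumption
      rw [hct]
      simp
  have hmapeq : P.map (fun ω => ((X ω) ^ 2, C ω))
      = (P.map (fun ω => (X ω) ^ 2)).prod (P.map C) :=
    (indepFun_iff_map_prod_eq_prod_map_map hX2.aemeasurable hCmeas.aemeasurable).mp hindep2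
  refine ⟨?_, hmapeq⟩
  rw [← hmapeq]
  haveI : IsProbabilityMeasure (P.map (fun ω => ((X ω) ^ 2, C ω))) :=
    Measure.isProbabilityMeasure_map (hX2.prodMk hCmeas).aemeasurable
  exact klDiv_self' _
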